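/- Let y = X^T w* + b where b ∈ R^n is supported on the set B of corrupted points, let w ∈ R^d be any model with ‖w − w*‖_2 = ε, let r = X^T w − y, and let S = diag(s) with s_i = min(1/|r_i|, M). Then, deterministically, ‖S b‖_2² ≤ 4·(|B| + M²ε²·λ_max(X_B X_B^T)); in particular, if λ_max(X_B X_B^T) ≤ 1.01|B| then ‖S b‖_2² ≤ 4|B|·(1 + 1.01·M²ε²). -/
import Mathlib


open MeasureTheory ProbabilityTheory Matrix

/-- Euclidean norm of a vector in `Fin k → ℝ`. -/
noncomputable def euclNorm {k : ℕ} (v : Fin k → ℝ) : ℝ := Real.sqrt (∑ j, v j ^ 2)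

/-- The `M`-truncated IRLS weight for a residual `r`, i.e. `min (1/|r|) M`,
interpreted as `M` when the residual is zero. -/
noncomputable def trWeight (M r : ℝ) : ℝ := if r = 0 then M else min (1 / |r|) M

/-- Smallest eigenvalue of a symmetric matrix, via the Rayleigh quotient. -/
noncomputable def lamMin {k : ℕ} (A : Matrix (Fin k) (Fin k) ℝ) : ℝ :=
  sInf {r : ℝ | ∃ v : Fin k → ℝ, euclNorm v = 1 ∧ r = v ⬝ᵥ A.mulVec v}

/-- Largest eigenvalue of a symmetric matrix, via the Rayleigh quotient. -/
noncomputable def lamMax {k : ℕ} (A : Matrix (Fin k) (Fin k) ℝ) : ℝ :=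
  sSup {r : ℝ | ∃ v : Fin k → ℝ, euclNorm v = 1 ∧ r = v ⬝ᵥ A.mulVec v}

/-- Operator (spectral) norm of a `d × n` real matrix. -/
noncomputable def opNorm2 {d n : ℕ} (X : Matrix (Fin d) (Fin n) ℝ) : ℝ :=
  Real.sqrt (lamMax (X * Xᵀ))

/-- Covariate matrix whose `i`-th column is the sample point `s i`. -/
def Xmat {d n : ℕ} (s : Fin n → Fin d → ℝ) : Matrix (Fin d) (Fin n) ℝ :=
  Matrix.of fun j i => s i j

/-- `X_G`: the matrix agreeing with `X` on columns in `G` and zero elsewhere. -/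
def restrictCols {d n : ℕ} (X : Matrix (Fin d) (Fin n) ℝ) (G : Finset (Fin n)) :
    Matrix (Fin d) (Fin n) ℝ :=
  Matrix.of fun j i => if i ∈ G then X j i else 0

/-- The `M`-truncated weights assigned by model `w` on data `(X, y)`. -/
noncomputable def stirWeights {d n : ℕ} (X : Matrix (Fin d) (Fin n) ℝ) (y : Fin n → ℝ)
    (M : ℝ) (w : Fin d → ℝ) : Fin n → ℝ :=
  fun i => trWeight M ((Xᵀ.mulVec w - y) i)

/-- One step of (M-truncated) IRLS: weighted least squares with the current weights. -/
noncomputable def stirStep {d n : ℕ} (X : Matrix (Fin d) (Fin n) ℝ) (y : Fin n → ℝ)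
    (M : ℝ) (w : Fin d → ℝ) : Fin d → ℝ :=
  (X * Matrix.diagonal (stirWeights X y M w) * Xᵀ)⁻¹.mulVec
    (X.mulVec fun i => stirWeights X y M w i * y i)

/-- One step of STIR-GD with step length `C`: `w - (2C/(Mn)) • X S r`. -/
noncomputable def stirGDStep {d n : ℕ} (X : Matrix (Fin d) (Fin n) ℝ) (y : Fin n → ℝ)
    (C M : ℝ) (w : Fin d → ℝ) : Fin d → ℝ :=
  w - (2 * C / (M * n)) • X.mulVec (fun i => stirWeights X y M w i * (Xᵀ.mulVec w - y) i)

/-- An execution trace of a stagewise truncated algorithm (STIR / STIR-GD):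
`wStage T` is the model at the start of stage `T`, within stage `T` the truncation
level is `η^T * M₁`, the inner loop applies `step`, and the stage ends the first time
successive iterates are within `2/(η * (η^T * M₁))` of each other. -/
def IsSTIRTrace {d : ℕ} (step : ℝ → (Fin d → ℝ) → (Fin d → ℝ))
    (M₁ η : ℝ) (w0 : Fin d → ℝ) (wStage : ℕ → Fin d → ℝ) (stageLen : ℕ → ℕ) : Prop :=
  wStage 0 = w0 ∧
  ∃ wIter : ℕ → ℕ → Fin d → ℝ,
    (∀ T, wIter T 0 = wStage T) ∧
    (∀ T t, wIter T (t + 1) = step (η ^ T * M₁) (wIter T t)) ∧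
    (∀ T, euclNorm (wIter T (stageLen T + 1) - wIter T (stageLen T)) ≤
      2 / (η * (η ^ T * M₁))) ∧
    (∀ T t, t < stageLen T →
      2 / (η * (η ^ T * M₁)) < euclNorm (wIter T (t + 1) - wIter T t)) ∧
    (∀ T, wStage (T + 1) = wIter T (stageLen T + 1))

/-- A real random variable `Z` is `R`-sub-Gaussian (ψ₂-norm at most `R`). -/
def IsSubGaussianRV {Ω : Type*} [MeasurableSpace Ω] (μ : Measure Ω) (Z : Ω → ℝ) (R : ℝ) : Prop :=
  ∀ p : ℝ, 1 ≤ p → (∫ ω, |Z ω| ^ p ∂μ) ^ (1 / p) ≤ R * Real.sqrt p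

/-- A distribution on `ℝ^d` is `R`-sub-Gaussian if all its one-dimensional marginals are. -/
def IsSubGaussianVec {d : ℕ} (D : Measure (Fin d → ℝ)) (R : ℝ) : Prop :=
  ∀ v : Fin d → ℝ, euclNorm v = 1 → IsSubGaussianRV D (fun x => v ⬝ᵥ x) R

/-- A distribution on `ℝ^d` is isotropic if `E ⟨v, x⟩² = 1` for every unit `v`. -/
def IsIsotropic {d : ℕ} (D : Measure (Fin d → ℝ)) : Prop :=
  ∀ v : Fin d → ℝ, euclNorm v = 1 → ∫ x, (v ⬝ᵥ x) ^ 2 ∂D = 1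

/-- The weighted strong convexity constant
`c = inf_{u,v unit} E_{x~D} [ min(1/|⟨u,x⟩|, 1) ⟨x,v⟩² ]`. -/
noncomputable def cWSC {d : ℕ} (D : Measure (Fin d → ℝ)) : ℝ :=
  ⨅ p : {q : (Fin d → ℝ) × (Fin d → ℝ) // euclNorm q.1 = 1 ∧ euclNorm q.2 = 1},
    ∫ x, trWeight 1 (p.1.1 ⬝ᵥ x) * (p.1.2 ⬝ᵥ x) ^ 2 ∂D

/-- The weighted strong convexity constant in the presence of dense noise:
`c_ε = inf_{0 ≤ r ≤ 1/M, u,v unit} E [ min(1/|Mr⟨u,x⟩ - Mε|, 1) ⟨x,v⟩² ]`. -/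
noncomputable def cWSCnoise {d : ℕ} (D : Measure (Fin d → ℝ)) (Dε : Measure ℝ) [SFinite Dε]
    (M : ℝ) : ℝ :=
  ⨅ p : {q : ℝ × (Fin d → ℝ) × (Fin d → ℝ) //
      0 ≤ q.1 ∧ q.1 ≤ 1 / M ∧ euclNorm q.2.1 = 1 ∧ euclNorm q.2.2 = 1},
    ∫ z : (Fin d → ℝ) × ℝ,
      trWeight 1 (M * p.1.1 * (p.1.2.1 ⬝ᵥ z.1) - M * z.2) * (p.1.2.2 ⬝ᵥ z.1) ^ 2 ∂(D.prod Dε)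

/-- The weighted Gram matrix `X_G S_G X_Gᵀ` induced by the sample `s`, the clean responses
`y_i = ⟨w*, x_i⟩`, the truncation level `M` and the model `w`. -/
noncomputable def gramG {d n : ℕ} (s : Fin n → Fin d → ℝ) (G : Finset (Fin n))
    (wstar : Fin d → ℝ) (M : ℝ) (w : Fin d → ℝ) : Matrix (Fin d) (Fin d) ℝ :=
  restrictCols (Xmat s) G *
    Matrix.diagonal (fun i => if i ∈ G then trWeight M (s i ⬝ᵥ (w - wstar)) else 0) *
    (restrictCols (Xmat s) G)ᵀ

/-- The weighted Gram matrix `X_G S_G X_Gᵀ` in the dense-noise setting, where the responses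
on good points are `y_i = ⟨w*, x_i⟩ + e_i`. -/
noncomputable def gramGnoisy {d n : ℕ} (s : Fin n → Fin d → ℝ) (e : Fin n → ℝ)
    (G : Finset (Fin n)) (wstar : Fin d → ℝ) (M : ℝ) (w : Fin d → ℝ) :
    Matrix (Fin d) (Fin d) ℝ :=
  restrictCols (Xmat s) G *
    Matrix.diagonal (fun i => if i ∈ G then trWeight M (s i ⬝ᵥ (w - wstar) - e i) else 0) *
    (restrictCols (Xmat s) G)ᵀ

/-- The scaled Huber loss `f_ε`. -/
noncomputable def huberS (ε x : ℝ) : ℝ := if |x| ≤ ε then (x ^ 2 / ε + ε) / 2 else |x|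

/-- The majorizer `g_ε(x; a)` of the scaled Huber loss. -/
noncomputable def huberMaj (ε x a : ℝ) : ℝ := (x ^ 2 / max |a| ε + max |a| ε) / 2

/-- The scaled-Huber objective `ℓ_ε(w) = (1/n) ∑ᵢ f_ε(⟨w, xᵢ⟩ - yᵢ)`. -/
noncomputable def huberObj {d n : ℕ} (X : Matrix (Fin d) (Fin n) ℝ) (y : Fin n → ℝ)
    (ε : ℝ) (w : Fin d → ℝ) : ℝ :=
  (1 / (n : ℝ)) * ∑ i, huberS ε ((Xᵀ.mulVec w - y) i)

lemma trWeight_nonneg (M r : ℝ) (hM : 0 ≤ M) : 0 ≤ trWeight M r := by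
  unfold trWeight; split
  · exact hM
  · exact le_min (by positivity) hM

lemma trWeight_le (M r : ℝ) (hM : 0 ≤ M) : trWeight M r ≤ M := by
  unfold trWeight; split
  · exact le_rfl
  · exact min_le_right _ _

lemma key_pt (M a c : ℝ) (hM : 0 ≤ M) :
    (trWeight M (a - c) * c) ^ 2 ≤ 4 * (1 + M ^ 2 * a ^ 2) := by
  have ht0 : 0 ≤ trWeight M (a - c) := trWeight_nonneg _ _ hM
  by_cases hc : |c| ≤ 2 * |a|
  · have htM : trWeight M (a - c) ≤ M := trWeight_le _ _ hM
    have h1 : (trWeight M (a - c) * c) ^ 2 ≤ M ^ 2 * c ^ 2 := by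
      rw [mul_pow]
      exact mul_le_mul_of_nonneg_right (pow_le_pow_left₀ ht0 htM 2) (sq_nonneg c)
    have h2 : c ^ 2 ≤ 4 * a ^ 2 := by
      have h5 := mul_self_le_mul_self (abs_nonneg c) hc
      nlinarith [sq_abs a, sq_abs c]
    nlinarith [sq_nonneg M, sq_nonneg a]
  · push_neg at hc
    have ha0 : 0 ≤ |a| := abs_nonneg a
    have hcpos : 0 < |c| := by linarith
    have hne : a - c ≠ 0 := by
      intro h
      have : a = c := by linarith [sub_eq_zero.mp h]
      rw [this] at hc; linarith
    have hd : |c| / 2 ≤ |a - c| := by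
      have := abs_sub_abs_le_abs_sub c a
      rw [abs_sub_comm] at this; linarith
    have hdpos : 0 < |a - c| := by linarith
    have ht : trWeight M (a - c) ≤ 1 / |a - c| := by
      unfold trWeight; rw [if_neg hne]; exact min_le_left _ _
    have h3 : trWeight M (a - c) * |c| ≤ 2 := by
      have : trWeight M (a - c) * |c| ≤ (1 / |a - c|) * |c| := by gcongr
      have h4 : (1 / |a - c|) * |c| ≤ 2 := by
        rw [div_mul_eq_mul_div, div_le_iff₀ hdpos]; linarith
      linarith
    have h5 : (trWeight M (a - c) * c) ^ 2 = (trWeight M (a - c) * |c|) ^ 2 := by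
      rw [mul_pow, mul_pow, sq_abs]
    nlinarith [mul_nonneg ht0 hcpos.le]

lemma quad_eq {d n : ℕ} (Y : Matrix (Fin d) (Fin n) ℝ) (u : Fin d → ℝ) :
    u ⬝ᵥ (Y * Yᵀ).mulVec u = ∑ i, (Yᵀ.mulVec u i) ^ 2 := by
  rw [← Matrix.mulVec_mulVec, Matrix.dotProduct_mulVec, ← Matrix.mulVec_transpose]
  simp [dotProduct, sq]

lemma sum_sq_eq_one {k : ℕ} {v : Fin k → ℝ} (h : euclNorm v = 1) : ∑ j, v j ^ 2 = 1 := by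
  have h0 : 0 ≤ ∑ j, v j ^ 2 := Finset.sum_nonneg fun j _ => sq_nonneg _
  unfold euclNorm at h
  nlinarith [Real.sq_sqrt h0, h]

lemma rayleigh_le {d n : ℕ} (Y : Matrix (Fin d) (Fin n) ℝ) (u : Fin d → ℝ) :
    u ⬝ᵥ (Y * Yᵀ).mulVec u ≤ lamMax (Y * Yᵀ) * (euclNorm u) ^ 2 := by
  set C : ℝ := ∑ i : Fin n, ∑ j : Fin d, (Y j i) ^ 2 with hC
  have hbdd : BddAbove {r : ℝ | ∃ v : Fin d → ℝ, euclNorm v = 1 ∧ r = v ⬝ᵥ (Y * Yᵀ).mulVec v} := by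
    refine ⟨C, fun r hr => ?_⟩
    obtain ⟨v, hv1, rfl⟩ := hr
    rw [quad_eq]
    refine le_trans (Finset.sum_le_sum fun i _ => ?_) (le_of_eq rfl)
    · calc (Yᵀ.mulVec v i) ^ 2 = (∑ j, Y j i * v j) ^ 2 := by
            simp [Matrix.mulVec, dotProduct, Matrix.transpose_apply]
        _ ≤ (∑ j, (Y j i) ^ 2) * (∑ j, v j ^ 2) :=
            Finset.sum_mul_sq_le_sq_mul_sq _ _ _
        _ = ∑ j, (Y j i) ^ 2 := by rw [sum_sq_eq_one hv1, mul_one]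
  have hnn : 0 ≤ euclNorm u := Real.sqrt_nonneg _
  rcases eq_or_lt_of_le hnn with h0 | hpos
  · -- euclNorm u = 0, so u = 0
    have hnn2 : 0 ≤ ∑ j, u j ^ 2 := Finset.sum_nonneg fun j _ => sq_nonneg _
    have hsum : ∑ j, u j ^ 2 = 0 := by
      have hle : ∑ j, u j ^ 2 ≤ 0 := Real.sqrt_eq_zero'.mp h0.symm
      linarith
    have hu : u = 0 := by
      funext j
      have hz := (Finset.sum_eq_zero_iff_of_nonneg
        (fun j _ => sq_nonneg (u j))).mp hsum j (Finset.mem_univ j)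
      exact pow_eq_zero_iff (two_ne_zero) |>.mp hz
    rw [hu]
    simp [euclNorm]
  · set ε := euclNorm u with hε
    have hεs : ∑ j, u j ^ 2 = ε ^ 2 := by
      have h0 : 0 ≤ ∑ j, u j ^ 2 := Finset.sum_nonneg fun j _ => sq_nonneg _
      rw [hε]; unfold euclNorm; rw [Real.sq_sqrt h0]
    set v : Fin d → ℝ := ε⁻¹ • u with hv
    have hv1 : euclNorm v = 1 := by
      unfold euclNorm
      rw [show ∑ j, v j ^ 2 = ε⁻¹ ^ 2 * ∑ j, u j ^ 2 by
        rw [Finset.mul_sum]; exact Finset.sum_congr rfl fun j _ => by simp [hv]; ring]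
      rw [hεs]
      rw [show ε⁻¹ ^ 2 * ε ^ 2 = 1 by field_simp]
      exact Real.sqrt_one
    have hmem : v ⬝ᵥ (Y * Yᵀ).mulVec v ∈
        {r : ℝ | ∃ v : Fin d → ℝ, euclNorm v = 1 ∧ r = v ⬝ᵥ (Y * Yᵀ).mulVec v} :=
      ⟨v, hv1, rfl⟩
    have hle : v ⬝ᵥ (Y * Yᵀ).mulVec v ≤ lamMax (Y * Yᵀ) := le_csSup hbdd hmem
    have hscale : v ⬝ᵥ (Y * Yᵀ).mulVec v = ε⁻¹ ^ 2 * (u ⬝ᵥ (Y * Yᵀ).mulVec u) := by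
      rw [hv]
      simp [Matrix.mulVec_smul, smul_dotProduct, dotProduct_smul, smul_eq_mul]
      ring
    have hεne : ε ≠ 0 := ne_of_gt hpos
    have hqu : u ⬝ᵥ (Y * Yᵀ).mulVec u = ε ^ 2 * (v ⬝ᵥ (Y * Yᵀ).mulVec v) := by
      rw [hscale]; field_simp
    rw [hqu]
    have := mul_le_mul_of_nonneg_left hle (sq_nonneg ε)
    linarith

/-- **Lemma (bounding the weights on bad points).**
With responses `y = Xᵀ w* + b`, corruption `b` supported on `B`, a model `w` at distance
`ε` from `w*`, and `M`-truncated weights `S` induced by the residuals of `w`,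
deterministically `‖S b‖₂² ≤ 4 (|B| + M² ε² λ_max(X_B X_Bᵀ))`; in particular if
`λ_max(X_B X_Bᵀ) ≤ 1.01 |B|` then `‖S b‖₂² ≤ 4 |B| (1 + 1.01 M² ε²)`. -/
theorem bad_points_weight_bound
    {d n : ℕ} (X : Matrix (Fin d) (Fin n) ℝ) (wstar w : Fin d → ℝ)
    (b : Fin n → ℝ) (B : Finset (Fin n)) (M ε : ℝ)
    (hM : 0 ≤ M) (hb : ∀ i, i ∉ B → b i = 0)
    (hε : euclNorm (w - wstar) = ε) :
    (∑ i, (stirWeights X (Xᵀ.mulVec wstar + b) M w i * b i) ^ 2 ≤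
      4 * (B.card + M ^ 2 * ε ^ 2 * lamMax (restrictCols X B * (restrictCols X B)ᵀ))) ∧
    (lamMax (restrictCols X B * (restrictCols X B)ᵀ) ≤ 1.01 * B.card →
      ∑ i, (stirWeights X (Xᵀ.mulVec wstar + b) M w i * b i) ^ 2 ≤
        4 * B.card * (1 + 1.01 * M ^ 2 * ε ^ 2)) := by
  set u := w - wstar with hu
  set Y := restrictCols X B with hY
  have hres : ∀ i, stirWeights X (Xᵀ.mulVec wstar + b) M w i =
      trWeight M (Xᵀ.mulVec u i - b i) := by
    intro i
    unfold stirWeights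
    congr 1
    simp [hu, Matrix.mulVec_sub, Pi.sub_apply, Pi.add_apply]
    ring
  have hY' : ∀ i, Yᵀ.mulVec u i = if i ∈ B then Xᵀ.mulVec u i else 0 := by
    intro i
    by_cases hi : i ∈ B <;>
      simp [hY, restrictCols, Matrix.mulVec, dotProduct, Matrix.transpose_apply, hi]
  have hq : u ⬝ᵥ (Y * Yᵀ).mulVec u = ∑ i ∈ B, (Xᵀ.mulVec u i) ^ 2 := by
    rw [quad_eq]
    rw [← Finset.sum_subset (Finset.subset_univ B)
      (fun i _ hi => by rw [hY' i, if_neg hi]; ring)]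
    exact Finset.sum_congr rfl fun i hi => by rw [hY' i, if_pos hi]
  have hray : ∑ i ∈ B, (Xᵀ.mulVec u i) ^ 2 ≤ lamMax (Y * Yᵀ) * ε ^ 2 := by
    rw [← hq, ← hε]
    exact rayleigh_le Y u
  have hsum : ∑ i, (stirWeights X (Xᵀ.mulVec wstar + b) M w i * b i) ^ 2 =
      ∑ i ∈ B, (stirWeights X (Xᵀ.mulVec wstar + b) M w i * b i) ^ 2 :=
    (Finset.sum_subset (Finset.subset_univ B)
      (fun i _ hi => by rw [hb i hi]; ring)).symm
  have hmain : ∑ i, (stirWeights X (Xᵀ.mulVec wstar + b) M w i * b i) ^ 2 ≤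
      4 * B.card + 4 * M ^ 2 * ∑ i ∈ B, (Xᵀ.mulVec u i) ^ 2 := by
    rw [hsum]
    calc ∑ i ∈ B, (stirWeights X (Xᵀ.mulVec wstar + b) M w i * b i) ^ 2
        ≤ ∑ i ∈ B, 4 * (1 + M ^ 2 * (Xᵀ.mulVec u i) ^ 2) :=
          Finset.sum_le_sum fun i _ => by rw [hres i]; exact key_pt M _ _ hM
      _ = ∑ i ∈ B, (4 + 4 * (M ^ 2 * (Xᵀ.mulVec u i) ^ 2)) :=
          Finset.sum_congr rfl fun i _ => by ring
      _ = 4 * B.card + 4 * M ^ 2 * ∑ i ∈ B, (Xᵀ.mulVec u i) ^ 2 := by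
          rw [Finset.sum_add_distrib, Finset.sum_const, nsmul_eq_mul,
            show (4:ℝ) * M ^ 2 * ∑ i ∈ B, (Xᵀ.mulVec u i) ^ 2
              = ∑ i ∈ B, 4 * (M ^ 2 * (Xᵀ.mulVec u i) ^ 2) by
                rw [Finset.mul_sum]; exact Finset.sum_congr rfl fun i _ => by ring]
          ring
  have hMε : (0:ℝ) ≤ 4 * M ^ 2 := by positivity
  have h1 : ∑ i, (stirWeights X (Xᵀ.mulVec wstar + b) M w i * b i) ^ 2 ≤
      4 * (B.card + M ^ 2 * ε ^ 2 * lamMax (Y * Yᵀ)) := by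
    have := mul_le_mul_of_nonneg_left hray hMε
    linarith [hmain, this]
  refine ⟨h1, fun hlam => ?_⟩
  have hnn : (0:ℝ) ≤ M ^ 2 * ε ^ 2 := by positivity
  have h2 := mul_le_mul_of_nonneg_left hlam hnn
  calc ∑ i, (stirWeights X (Xᵀ.mulVec wstar + b) M w i * b i) ^ 2
      ≤ 4 * (B.card + M ^ 2 * ε ^ 2 * lamMax (Y * Yᵀ)) := h1
    _ ≤ 4 * (B.card + M ^ 2 * ε ^ 2 * (1.01 * B.card)) := by linarith
    _ = 4 * B.card * (1 + 1.01 * M ^ 2 * ε ^ 2) := by ring
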